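/- Given any three mutually distant elements of 𝒢, there is a unique Z-regulus containing them. -/

import Mathlib

/-- The Grassmannian `𝒢` of all subspaces `X ≤ V` with `X ≅ V/X`. -/
def Grass (K V : Type*) [DivisionRing K] [AddCommGroup V] [Module K V] :
    Set (Submodule K V) :=
  {X | Nonempty (X ≃ₗ[K] (V ⧸ X))}

variable {K V : Type*} [DivisionRing K] [AddCommGroup V] [Module K V]

/-- The dimension of the quotient `E / M` (computed as the rank of `E ⧸ (M ∩ E)`). -/
noncomputable def quotRank (M E : Submodule K V) : Cardinal :=
  Module.rank K (E ⧸ (M.comap E.subtype))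

/-- Two subspaces are adjacent if `dim (X/(X ⊓ Y)) = dim (Y/(X ⊓ Y)) = 1`. -/
def Adjacent (X Y : Submodule K V) : Prop :=
  quotRank (X ⊓ Y) X = 1 ∧ quotRank (X ⊓ Y) Y = 1

/-- Two subspaces are distant if they are complementary: `X ⊕ Y = V`. -/
def Distant (X Y : Submodule K V) : Prop := IsCompl X Y

/-- The star `𝒢[M⟩` with centre `M`. -/
def starSet (M : Submodule K V) : Set (Submodule K V) :=
  {E | M ≤ E ∧ quotRank M E = 1}

/-- `M` is the centre of a star, i.e. there is `X ∈ 𝒢` with `M ≤ X`, `dim (X/M) = 1`. -/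
def IsStarCentre (M : Submodule K V) : Prop :=
  ∃ X ∈ Grass K V, M ≤ X ∧ quotRank M X = 1

/-- The top `𝒢⟨N]` with carrier `N`. -/
def topSet (N : Submodule K V) : Set (Submodule K V) :=
  {E | E ≤ N ∧ quotRank E N = 1}

/-- `N` is the carrier of a top, i.e. there is `X ∈ 𝒢` with `X ≤ N`, `dim (N/X) = 1`. -/
def IsTopCarrier (N : Submodule K V) : Prop :=
  ∃ X ∈ Grass K V, X ≤ N ∧ quotRank X N = 1

/-- An adjacency clique: a set of mutually adjacent elements of `𝒢`. -/
def IsAdjClique (A : Set (Submodule K V)) : Prop :=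
  A ⊆ Grass K V ∧ A.Pairwise Adjacent

/-- A maximal adjacency clique. -/
def IsMaxAdjClique (A : Set (Submodule K V)) : Prop :=
  IsAdjClique A ∧ ∀ B, IsAdjClique B → A ⊆ B → A = B

/-- The pencil `𝒢[M,N] = {X ∈ 𝒢 | M < X < N}`. -/
def pencilSet (M N : Submodule K V) : Set (Submodule K V) :=
  {X ∈ Grass K V | M < X ∧ X < N}

/-- `(M, N)` defines a pencil: there is `X ∈ 𝒢` with `M ≤ X ≤ N` and
`dim (X/M) = dim (N/X) = 1`. -/
def IsPencilPair (M N : Submodule K V) : Prop :=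
  ∃ X ∈ Grass K V, M ≤ X ∧ X ≤ N ∧ quotRank M X = 1 ∧ quotRank X N = 1

/-- A pencil in `𝒢`. -/
def IsPencil (S : Set (Submodule K V)) : Prop :=
  ∃ M N : Submodule K V, IsPencilPair M N ∧ S = pencilSet M N

/-- A point is a one-dimensional subspace. -/
def IsPoint (p : Submodule K V) : Prop := Module.rank K p = 1

/-- A line is a two-dimensional subspace. -/
def IsLine (L : Submodule K V) : Prop := Module.rank K L = 2

/-- Two subspaces meet if they have a common point, i.e. nonzero intersection. -/
def Meets (X Y : Submodule K V) : Prop := X ⊓ Y ≠ ⊥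

/-- A distant clique: a set of mutually distant elements of `𝒢`. -/
def IsDistantClique (R : Set (Submodule K V)) : Prop :=
  R ⊆ Grass K V ∧ R.Pairwise Distant

/-- A set has at least three elements. -/
def HasThree (R : Set (Submodule K V)) : Prop :=
  ∃ A ∈ R, ∃ B ∈ R, ∃ C ∈ R, A ≠ B ∧ A ≠ C ∧ B ≠ C

/-- Condition (R2): if a line meets three mutually distinct elements of `R`
then it meets all elements of `R`. -/
def MeetsThreeMeetsAll (R : Set (Submodule K V)) : Prop :=
  ∀ L : Submodule K V, IsLine L →
    ∀ E₀ ∈ R, ∀ E₁ ∈ R, ∀ E₂ ∈ R, E₀ ≠ E₁ → E₀ ≠ E₂ → E₁ ≠ E₂ →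
      Meets L E₀ → Meets L E₁ → Meets L E₂ → ∀ E ∈ R, Meets L E

/-- A partial `Z`-regulus: conditions (R1) and (R2). -/
def IsPartialZRegulus (R : Set (Submodule K V)) : Prop :=
  (IsDistantClique R ∧ HasThree R) ∧ MeetsThreeMeetsAll R

/-- A `Z`-regulus: a partial `Z`-regulus that is maximal, i.e. not properly
contained in any partial `Z`-regulus. -/
def IsZRegulus (R : Set (Submodule K V)) : Prop :=
  IsPartialZRegulus R ∧ ∀ S : Set (Submodule K V), IsPartialZRegulus S → R ⊆ S → R = S

/-- A directrix of `R`: a line meeting all elements of `R`. -/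
def IsDirectrix (R : Set (Submodule K V)) (L : Submodule K V) : Prop :=
  IsLine L ∧ ∀ E ∈ R, Meets L E

/-- Condition (⊠2) from Theorem `Zreg`. -/
def BoxTwo (R : Set (Submodule K V)) : Prop :=
  ∀ E₀ ∈ R, ∀ E₁ ∈ R, ∀ E₂ ∈ R, E₀ ≠ E₁ → E₀ ≠ E₂ → E₁ ≠ E₂ →
    ∀ W ∈ Grass K V, Adjacent W E₀ → ¬ Distant W E₁ → ¬ Distant W E₂ →
      ∀ E ∈ R, ¬ Distant W E


open Submodule

section Helper
variable {K V : Type*} [DivisionRing K] [AddCommGroup V] [Module K V]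
variable (E₀ E₁ : Submodule K V)

/-- The graph of `g : E₀ → E₁` inside `V = E₀ ⊕ E₁`. -/
noncomputable def graphOf (h : IsCompl E₀ E₁) (g : E₀ →ₗ[K] E₁) : Submodule K V :=
  LinearMap.ker (E₁.subtype ∘ₗ E₁.projectionOnto E₀ h.symm
    - E₁.subtype ∘ₗ g ∘ₗ E₀.projectionOnto E₁ h)

variable {E₀ E₁} (h : IsCompl E₀ E₁) (g : E₀ →ₗ[K] E₁)

theorem mem_graphOf {x : V} :
    x ∈ graphOf E₀ E₁ h g ↔
      E₁.projectionOnto E₀ h.symm x = g (E₀.projectionOnto E₁ h x) := by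
  simp only [graphOf, LinearMap.mem_ker, LinearMap.sub_apply, LinearMap.comp_apply, sub_eq_zero]
  exact ⟨fun hh => Subtype.ext hh, fun hh => congrArg _ hh⟩

theorem graph_add_mem (v : E₀) : (v : V) + (g v : V) ∈ graphOf E₀ E₁ h g := by
  rw [mem_graphOf]
  simp

theorem graphOf_zero : graphOf E₀ E₁ h (0 : E₀ →ₗ[K] E₁) = E₀ := by
  ext x
  rw [mem_graphOf]
  simp [Submodule.linearProjOfIsCompl_apply_eq_zero_iff]

theorem proj_decomp (x : V) :
    ((E₀.projectionOnto E₁ h x : V) + (E₁.projectionOnto E₀ h.symm x : V)) = x :=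
  by
    have := Submodule.projection_add_projection_eq_self h x
    rwa [← Submodule.coe_projectionOnto_apply, ← Submodule.coe_projectionOnto_apply] at this

theorem graphOf_eq_iff {g g' : E₀ →ₗ[K] E₁} :
    graphOf E₀ E₁ h g = graphOf E₀ E₁ h g' ↔ ∀ v, g v = g' v := by
  constructor
  · intro he v
    have h1 : ((v : V) + (g v : V)) ∈ graphOf E₀ E₁ h g' := he ▸ graph_add_mem h g v
    rw [mem_graphOf] at h1
    simpa using h1
  · intro hv
    have : g = g' := LinearMap.ext hv
    rw [this]

theorem isCompl_graphOf_right : IsCompl (graphOf E₀ E₁ h g) E₁ := by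
  constructor
  · rw [disjoint_iff]
    ext x
    simp only [Submodule.mem_inf, Submodule.mem_bot]
    constructor
    · rintro ⟨h1, h2⟩
      rw [mem_graphOf] at h1
      have h0 : E₀.projectionOnto E₁ h x = 0 :=
        Submodule.projectionOnto_apply_of_mem_right h h2
      have := proj_decomp h x
      rw [h0] at h1 this
      simp only [map_zero] at h1
      rw [h1] at this
      simpa using this.symm
    · rintro rfl; exact ⟨Submodule.zero_mem _, Submodule.zero_mem _⟩
  · rw [codisjoint_iff, eq_top_iff]
    intro x _
    set v := E₀.projectionOnto E₁ h x
    set w := E₁.projectionOnto E₀ h.symm x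
    have hx : x = ((v : V) + (g v : V)) + ((w : V) - (g v : V)) := by
      have := proj_decomp h x
      abel_nf
      rw [this]  -- may need fixing
    rw [hx]
    exact Submodule.add_mem_sup (graph_add_mem h g v)
      (Submodule.sub_mem _ w.2 (g v).2)


/-- Every complement of `E₁` is the graph of a map `E₀ → E₁`. -/
theorem exists_graphOf {X : Submodule K V} (hX : IsCompl X E₁) :
    ∃ g : E₀ →ₗ[K] E₁, X = graphOf E₀ E₁ h g := by
  set q := X.projectionOnto E₁ hX with hq
  refine ⟨(E₁.projectionOnto E₀ h.symm) ∘ₗ X.subtype ∘ₗ q ∘ₗ E₀.subtype, ?_⟩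
  ext x
  rw [mem_graphOf]
  simp only [LinearMap.comp_apply, Submodule.subtype_apply]
  set v := E₀.projectionOnto E₁ h x with hv
  set y : V := (q (v : V) : V) with hy
  have hyX : y ∈ X := (q (v : V)).2
  have he1 : (v : V) - y ∈ E₁ := by
    have hdec := proj_decomp hX (v : V)
    have hrw : (v : V) - y = (E₁.projectionOnto X hX.symm (v : V) : V) :=
      sub_eq_iff_eq_add'.mpr hdec.symm
    rw [hrw]; exact (E₁.projectionOnto X hX.symm (v : V)).2
  have hp0y : E₀.projectionOnto E₁ h y = v := by
    have hrw : y = (v : V) - ((v : V) - y) := (sub_sub_cancel _ _).symm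
    rw [hrw, map_sub, Submodule.linearProjOfIsCompl_apply_left h v,
      Submodule.projectionOnto_apply_of_mem_right h he1, sub_zero]
  constructor
  · intro hx
    have hqv : q (v : V) = q x := by
      have hE1 : x - (v : V) ∈ E₁ := by
        have hdec := proj_decomp h x
        have hrw : x - (v : V) = ((E₁.projectionOnto E₀ h.symm x : V)) :=
          sub_eq_iff_eq_add'.mpr hdec.symm
        rw [hrw]; exact (E₁.projectionOnto E₀ h.symm x).2
      have h0 : q (x - (v : V)) = 0 :=
        Submodule.projectionOnto_apply_of_mem_right hX hE1
      have hms := map_sub q x (v : V)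
      rw [h0] at hms
      exact (sub_eq_zero.mp hms.symm).symm
    have hqx : q x = ⟨x, hx⟩ := Submodule.linearProjOfIsCompl_apply_left hX ⟨x, hx⟩
    have hyx : y = x := by rw [hy, hqv, hqx]
    rw [hyx]
  · intro hx
    -- hx : p1 x = p1 y ; conclude x = y ∈ X
    have hxy : x = y := by
      have d1 := proj_decomp h x
      have d2 := proj_decomp h y
      rw [← d1, ← d2, hp0y, ← hv, hx]
    rw [hxy]; exact hyX

theorem p0_add (v : E₀) (w : E₁) :
    E₀.projectionOnto E₁ h ((v : V) + (w : V)) = v := by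
  rw [map_add, Submodule.linearProjOfIsCompl_apply_left h v,
    Submodule.projectionOnto_apply_of_mem_right h w.2, add_zero]

theorem p1_add (v : E₀) (w : E₁) :
    E₁.projectionOnto E₀ h.symm ((v : V) + (w : V)) = w := by
  rw [map_add, Submodule.linearProjOfIsCompl_apply_left h.symm w,
    Submodule.projectionOnto_apply_of_mem_right h.symm v.2, zero_add]

theorem graphOf_repr {x : V} (hx : x ∈ graphOf E₀ E₁ h g) :
    x = ((E₀.projectionOnto E₁ h x : V)) + (g (E₀.projectionOnto E₁ h x) : V) := by
  rw [mem_graphOf] at hx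
  conv_lhs => rw [← proj_decomp h x]
  rw [hx]

/-- Graphs of maps with bijective difference are complementary. -/
theorem isCompl_graphOf_graphOf {g g' : E₀ →ₗ[K] E₁}
    (hbij : Function.Bijective (g' - g)) :
    IsCompl (graphOf E₀ E₁ h g) (graphOf E₀ E₁ h g') := by
  constructor
  · rw [disjoint_iff]
    ext x
    simp only [Submodule.mem_inf, Submodule.mem_bot]
    constructor
    · rintro ⟨h1, h2⟩
      rw [mem_graphOf] at h1 h2
      set v := E₀.projectionOnto E₁ h x
      have hv0 : (g' - g) v = 0 := by
        rw [LinearMap.sub_apply, ← h1, ← h2, sub_self]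
      have hv : v = 0 := hbij.injective (by rw [hv0, map_zero])
      have hd := proj_decomp h x
      rw [← hd]
      show ((v : V)) + _ = 0
      rw [hv, h1, hv]
      simp
    · rintro rfl; exact ⟨Submodule.zero_mem _, Submodule.zero_mem _⟩
  · rw [codisjoint_iff, eq_top_iff]
    intro x _
    set v₀ := E₀.projectionOnto E₁ h x
    set w₀ := E₁.projectionOnto E₀ h.symm x
    obtain ⟨v', hv'⟩ := hbij.surjective (w₀ - g v₀)
    set v : E₀ := v₀ - v'
    have hx : x = ((v : V) + (g v : V)) + ((v' : V) + (g' v' : V)) := by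
      have hd := proj_decomp h x
      have hw : (g v : V) + (g' v' : V) = (w₀ : V) := by
        have : g v + g' v' = w₀ := by
          have h1 : g v = g v₀ - g v' := by simp [v, map_sub]
          rw [h1]
          have h2 : (g' - g) v' = w₀ - g v₀ := hv'
          rw [LinearMap.sub_apply] at h2
          have : g' v' = w₀ - g v₀ + g v' := by rw [← h2]; abel
          rw [this]; abel
        simpa using congrArg (Submodule.subtype E₁) this
      have hvv : (v : V) + (v' : V) = (v₀ : V) := by
        have : v + v' = v₀ := by simp [v]
        simpa using congrArg (Submodule.subtype E₀) this
      calc x = (v₀ : V) + (w₀ : V) := hd.symm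
        _ = ((v : V) + (v' : V)) + ((g v : V) + (g' v' : V)) := by rw [hw, hvv]
        _ = ((v : V) + (g v : V)) + ((v' : V) + (g' v' : V)) := by abel
    rw [hx]
    exact Submodule.add_mem_sup (graph_add_mem h g v) (graph_add_mem h g' v')

/-- If the graph of `g` is complementary to `E₀`, then `g` is bijective. -/
theorem bijective_of_isCompl_graphOf_left {g : E₀ →ₗ[K] E₁}
    (hc : IsCompl (graphOf E₀ E₁ h g) E₀) : Function.Bijective g := by
  constructor
  · intro v v' hvv
    rw [← sub_eq_zero, ← map_sub] at hvv
    by_contra hne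
    have hv : v - v' ≠ 0 := sub_ne_zero.mpr hne
    set u := v - v'
    have hmem : ((u : V)) ∈ graphOf E₀ E₁ h g ⊓ E₀ := by
      refine Submodule.mem_inf.mpr ⟨?_, u.2⟩
      rw [mem_graphOf]
      rw [Submodule.linearProjOfIsCompl_apply_left h u,
        Submodule.projectionOnto_apply_of_mem_right h.symm u.2, hvv]
    rw [hc.inf_eq_bot] at hmem
    exact hv (by exact_mod_cast Subtype.ext (Submodule.mem_bot K |>.mp hmem))
  · intro w
    have : ((w : V)) ∈ graphOf E₀ E₁ h g ⊔ E₀ := by rw [hc.sup_eq_top]; trivial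
    obtain ⟨a, ha, b, hb, hab⟩ := Submodule.mem_sup.mp this
    refine ⟨E₀.projectionOnto E₁ h a, ?_⟩
    rw [mem_graphOf] at ha
    have := congrArg (E₁.projectionOnto E₀ h.symm) hab
    rw [map_add, Submodule.projectionOnto_apply_of_mem_right h.symm hb, add_zero,
      Submodule.linearProjOfIsCompl_apply_left h.symm w] at this
    rw [← ha, this]


/-- A linear endomorphism over a division ring that is "locally scalar" on a space of
rank `> 1` is globally a central scalar. -/
theorem exists_central_of_locally_scalar {W : Type*} [AddCommGroup W] [Module K W]
    (hW : 1 < Module.rank K W) (f : W →ₗ[K] W)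
    (hf : ∀ w : W, ∃ c : K, f w = c • w) :
    ∃ c ∈ Subring.center K, ∀ w, f w = c • w := by
  have hnt : Nontrivial W := by
    rcases subsingleton_or_nontrivial W with hs | hs
    · exfalso
      have h0 : Module.rank K W = 0 := rank_subsingleton' K W
      rw [h0] at hW; exact absurd hW (by simp)
    · exact hs
  choose cc hcc using hf
  have uniq : ∀ (w : W), w ≠ 0 → ∀ c : K, f w = c • w → c = cc w := by
    intro w hw c hc
    have h0 : (c - cc w) • w = 0 := by rw [sub_smul, ← hc, ← hcc w, sub_self]
    rcases smul_eq_zero.mp h0 with h | h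
    · exact sub_eq_zero.mp h
    · exact absurd h hw
  have exists_out : ∀ w : W, ∃ u, u ∉ Submodule.span K {w} := by
    intro w
    have hne : Submodule.span K ({w} : Set W) ≠ ⊤ := by
      intro htop
      have h1 : Module.rank K (Submodule.span K ({w} : Set W)) ≤ 1 := by
        simpa using rank_span_le (R := K) ({w} : Set W)
      rw [htop, rank_top] at h1
      exact absurd hW (not_lt.mpr h1)
    by_contra hcon
    push_neg at hcon
    exact hne (Submodule.eq_top_iff'.mpr hcon)
  -- independence from non-membership in a span
  have hind : ∀ (w u : W), w ≠ 0 → u ∉ Submodule.span K {w} →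
      ∀ a b : K, a • w + b • u = 0 → a = 0 ∧ b = 0 := by
    intro w u hw hu a b hab
    have hb : b = 0 := by
      by_contra hb
      have : u = (-(b⁻¹ * a)) • w := by
        have h1 : b • u = -(a • w) := eq_neg_of_add_eq_zero_right hab
        have h2 : u = b⁻¹ • (b • u) := by rw [smul_smul, inv_mul_cancel₀ hb, one_smul]
        rw [h2, h1, smul_neg, smul_smul, ← neg_smul]
      exact hu (this ▸ Submodule.smul_mem _ _ (Submodule.mem_span_singleton_self w))
    refine ⟨?_, hb⟩
    rw [hb, zero_smul, add_zero] at hab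
    rcases smul_eq_zero.mp hab with h | h
    · exact h
    · exact absurd h hw
  -- step 1: the scalar agrees on w and any u outside span {w}
  have step1 : ∀ (w u : W), w ≠ 0 → u ∉ Submodule.span K {w} → cc w = cc u := by
    intro w u hw hu
    have hu0 : u ≠ 0 := fun e => hu (e ▸ Submodule.zero_mem _)
    have hwu : w + u ≠ 0 := by
      intro e
      have := hind w u hw hu 1 1 (by rw [one_smul, one_smul]; exact e)
      exact one_ne_zero this.1
    have hsum : (cc w - cc (w + u)) • w + (cc u - cc (w + u)) • u = 0 := by
      have h1 : cc (w + u) • w + cc (w + u) • u = cc w • w + cc u • u := by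
        rw [← smul_add, ← hcc (w + u), map_add, hcc w, hcc u]
      calc (cc w - cc (w + u)) • w + (cc u - cc (w + u)) • u
          = (cc w • w + cc u • u) - (cc (w + u) • w + cc (w + u) • u) := by
            rw [sub_smul, sub_smul]; abel
        _ = 0 := by rw [h1, sub_self]
    obtain ⟨ha, hb⟩ := hind w u hw hu _ _ hsum
    rw [sub_eq_zero] at ha hb
    rw [ha, ← hb]
  -- step 2: the scalar is the same for all nonzero vectors
  have step2 : ∀ (w w' : W), w ≠ 0 → w' ≠ 0 → cc w = cc w' := by
    intro w w' hw hw'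
    by_cases hc : w' ∈ Submodule.span K ({w} : Set W)
    · obtain ⟨u, hu⟩ := exists_out w
      have hu' : u ∉ Submodule.span K ({w'} : Set W) := by
        intro hmem
        rcases Submodule.mem_span_singleton.mp hmem with ⟨b, rfl⟩
        rcases Submodule.mem_span_singleton.mp hc with ⟨a, rfl⟩
        exact hu (by rw [smul_smul]; exact Submodule.smul_mem _ _ (Submodule.mem_span_singleton_self w))
      rw [step1 w u hw hu, step1 w' u hw' hu']
    · exact step1 w w' hw hc
  obtain ⟨w₀, hw₀⟩ := exists_ne (0 : W)
  refine ⟨cc w₀, ?_, ?_⟩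
  · rw [Subring.mem_center_iff]
    intro lam
    by_cases hlam : lam = 0
    · rw [hlam, zero_mul, mul_zero]
    · have hlw : lam • w₀ ≠ 0 := smul_ne_zero hlam hw₀
      have h1 : f (lam • w₀) = (lam * cc w₀) • w₀ := by
        rw [map_smul, hcc w₀, smul_smul]
      have h2 : f (lam • w₀) = (cc w₀ * lam) • w₀ := by
        rw [hcc (lam • w₀), step2 (lam • w₀) w₀ hlw hw₀, smul_smul]
      have := h1.symm.trans h2
      have h0 : (lam * cc w₀ - cc w₀ * lam) • w₀ = 0 := by rw [sub_smul, this, sub_self]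
      rcases smul_eq_zero.mp h0 with h | h
      · exact sub_eq_zero.mp h
      · exact absurd h hw₀
  · intro w
    by_cases hw : w = 0
    · rw [hw, map_zero, smul_zero]
    · rw [hcc w, step2 w w₀ hw hw₀]

theorem pair_indep_of_isCompl (hco : IsCompl E₀ E₁) {v w : V} (hv : v ∈ E₀) (hw : w ∈ E₁)
    (hv0 : v ≠ 0) (hw0 : w ≠ 0) :
    ∀ a b : K, a • v + b • w = 0 → a = 0 ∧ b = 0 := by
  intro a b hab
  have h1 : a • v = -(b • w) := eq_neg_of_add_eq_zero_left hab
  have h2 : a • v ∈ E₀ ⊓ E₁ := by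
    refine Submodule.mem_inf.mpr ⟨Submodule.smul_mem _ _ hv, ?_⟩
    rw [h1]; exact Submodule.neg_mem _ (Submodule.smul_mem _ _ hw)
  rw [hco.inf_eq_bot, Submodule.mem_bot] at h2
  have ha : a = 0 := by
    rcases smul_eq_zero.mp h2 with h' | h'
    · exact h'
    · exact absurd h' hv0
  refine ⟨ha, ?_⟩
  rw [ha, zero_smul, zero_add] at hab
  rcases smul_eq_zero.mp hab with h' | h'
  · exact h'
  · exact absurd h' hw0

theorem rank_span_pair_eq_two {x y : V}
    (hind : ∀ a b : K, a • x + b • y = 0 → a = 0 ∧ b = 0) :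
    Module.rank K (Submodule.span K ({x, y} : Set V)) = 2 := by
  have hli : LinearIndependent K ![x, y] := LinearIndependent.pair_iff.mpr hind
  have := rank_span hli
  have hr : Set.range ![x, y] = ({x, y} : Set V) := by
    ext z; simp [Fin.exists_fin_two]; tauto
  rw [hr] at this
  rw [this]
  have hxy : x ≠ y := by
    intro e
    have := hind 1 (-1) (by rw [e]; simp)
    exact one_ne_zero this.1
  rw [Cardinal.mk_insert (by simp [hxy]), Cardinal.mk_singleton, one_add_one_eq_two]

theorem span_pair_eq_of_rank_two {L : Submodule K V} (hL : Module.rank K L = 2)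
    {x y : V} (hx : x ∈ L) (hy : y ∈ L)
    (hind : ∀ a b : K, a • x + b • y = 0 → a = 0 ∧ b = 0) :
    Submodule.span K ({x, y} : Set V) = L := by
  have hL2 : Module.rank K L = ((2 : ℕ) : Cardinal) := by rw [hL]; norm_num
  have hfin : Module.Finite K L := Module.finite_of_rank_eq_nat hL2
  have hfr : Module.finrank K L = 2 := Module.finrank_eq_of_rank_eq hL2
  have hsle : Submodule.span K ({x, y} : Set V) ≤ L := by
    rw [Submodule.span_le]
    intro z hz
    rcases hz with rfl | hz
    · exact hx
    · rw [Set.mem_singleton_iff] at hz; rw [hz]; exact hy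
  have hrs : Module.rank K (Submodule.span K ({x, y} : Set V)) = ((2 : ℕ) : Cardinal) := by
    rw [rank_span_pair_eq_two hind]; norm_num
  have hfrs : Module.finrank K (Submodule.span K ({x, y} : Set V)) = 2 :=
    Module.finrank_eq_of_rank_eq hrs
  exact Submodule.eq_of_le_of_finrank_le hsle (by rw [hfr, hfrs])

theorem indep_of_not_mem_span {W : Type*} [AddCommGroup W] [Module K W] {w u : W}
    (hw : w ≠ 0) (hu : u ∉ Submodule.span K {w}) :
    ∀ a b : K, a • w + b • u = 0 → a = 0 ∧ b = 0 := by
  intro a b hab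
  have hb : b = 0 := by
    by_contra hb
    have h1 : b • u = -(a • w) := eq_neg_of_add_eq_zero_right hab
    have h2 : u = (-(b⁻¹ * a)) • w := by
      have h3 : u = b⁻¹ • (b • u) := by rw [smul_smul, inv_mul_cancel₀ hb, one_smul]
      rw [h3, h1, smul_neg, smul_smul, ← neg_smul]
    exact hu (h2 ▸ Submodule.smul_mem _ _ (Submodule.mem_span_singleton_self w))
  refine ⟨?_, hb⟩
  rw [hb, zero_smul, add_zero] at hab
  rcases smul_eq_zero.mp hab with h' | h'
  · exact h'
  · exact absurd h' hw

theorem eq_of_le_of_rank_two {L T : Submodule K V} (hLT : L ≤ T)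
    (hL : Module.rank K L = 2) (hT : Module.rank K T = 2) : L = T := by
  have hT2 : Module.rank K T = ((2 : ℕ) : Cardinal) := by rw [hT]; norm_num
  have hL2 : Module.rank K L = ((2 : ℕ) : Cardinal) := by rw [hL]; norm_num
  have : Module.Finite K T := Module.finite_of_rank_eq_nat hT2
  exact Submodule.eq_of_le_of_finrank_le hLT
    (by rw [Module.finrank_eq_of_rank_eq hT2, Module.finrank_eq_of_rank_eq hL2])

section Regulus

variable (f : E₀ →ₗ[K] E₁)

/-- `g` is a central scalar multiple of `f`. -/
def IsCentralMul (g : E₀ →ₗ[K] E₁) : Prop :=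
  ∃ c ∈ Subring.center K, ∀ v, g v = c • f v

/-- Multiplication by a central scalar, composed with `f`. -/
def cSMul (c : K) (hc : c ∈ Subring.center K) : E₀ →ₗ[K] E₁ where
  toFun v := c • f v
  map_add' v v' := by rw [map_add, smul_add]
  map_smul' a v := by
    rw [map_smul, smul_smul, smul_smul, RingHom.id_apply, (Subring.mem_center_iff.mp hc a)]

theorem isCentralMul_cSMul (c : K) (hc : c ∈ Subring.center K) :
    IsCentralMul f (cSMul f c hc) := ⟨c, hc, fun _ => rfl⟩

theorem isCentralMul_self : IsCentralMul f f :=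
  ⟨1, Subring.one_mem _, fun v => (one_smul K (f v)).symm⟩

theorem isCentralMul_zero : IsCentralMul f 0 :=
  ⟨0, Subring.zero_mem _, fun v => by simp⟩

/-- The standard regulus determined by `E₀ ⊕ E₁ = V` and `f : E₀ ≃ E₁`. -/
def stdRegulus (h : IsCompl E₀ E₁) : Set (Submodule K V) :=
  insert E₁ {X | ∃ g : E₀ →ₗ[K] E₁, IsCentralMul f g ∧ X = graphOf E₀ E₁ h g}

end Regulus

section Main

variable {f : E₀ →ₗ[K] E₁}

theorem ntW {W : Type*} [AddCommGroup W] [Module K W]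
    (hW : 1 < Module.rank K W) : Nontrivial W := by
  rcases subsingleton_or_nontrivial W with hs | hs
  · exfalso
    have h0 : Module.rank K W = 0 := rank_subsingleton' K W
    rw [h0] at hW; exact absurd hW (by simp)
  · exact hs

theorem exists_v0 (hf : Function.Bijective f)
    (hE₁ : 1 < Module.rank K (E₁ : Submodule K V)) : ∃ v : E₀, v ≠ 0 := by
  have := ntW (K := K) hE₁
  obtain ⟨w, hw⟩ := exists_ne (0 : E₁)
  obtain ⟨v, hv⟩ := hf.surjective w
  exact ⟨v, fun e => hw (by rw [← hv, e, map_zero])⟩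

/-- Distinct central multiples give distinct graphs; conversely the scalars differ. -/
theorem central_scalar_eq_of_graph_eq (hf : Function.Bijective f)
    (hE₁ : 1 < Module.rank K (E₁ : Submodule K V)) {c c' : K} (hc : c ∈ Subring.center K)
    (hc' : c' ∈ Subring.center K)
    (he : ∀ v : E₀, c • f v = c' • f v) : c = c' := by
  obtain ⟨v, hv⟩ := exists_v0 hf hE₁
  have hfv : f v ≠ 0 := fun e => hv (hf.injective (by rw [e, map_zero]))
  have h0 : (c - c') • f v = 0 := by rw [sub_smul, he v, sub_self]
  rcases smul_eq_zero.mp h0 with h' | h'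
  · exact sub_eq_zero.mp h'
  · exact absurd h' hfv

/-- Graphs of two distinct central multiples of `f` are complementary. -/
theorem distant_graphs (h : IsCompl E₀ E₁) (hf : Function.Bijective f)
    {g g' : E₀ →ₗ[K] E₁} (hg : IsCentralMul f g)
    (hg' : IsCentralMul f g') (hne : graphOf E₀ E₁ h g ≠ graphOf E₀ E₁ h g') :
    IsCompl (graphOf E₀ E₁ h g) (graphOf E₀ E₁ h g') := by
  obtain ⟨c, hc, hgc⟩ := hg
  obtain ⟨c', hc', hgc'⟩ := hg'
  have hcc : c ≠ c' := by
    intro e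
    exact hne ((graphOf_eq_iff h).mpr (fun v => by rw [hgc v, hgc' v, e]))
  apply isCompl_graphOf_graphOf
  constructor
  · intro v v' hvv
    simp only [LinearMap.sub_apply, hgc, hgc'] at hvv
    have h1 : (c' - c) • f v = (c' - c) • f v' := by
      rw [sub_smul, sub_smul, hvv]
    have h2 : f v = f v' := by
      have := sub_ne_zero.mpr (Ne.symm hcc)
      have h3 := congrArg (fun z => (c' - c)⁻¹ • z) h1
      simpa [smul_smul, inv_mul_cancel₀ this] using h3
    exact hf.injective h2
  · intro w
    obtain ⟨u, hu⟩ := hf.surjective ((c' - c)⁻¹ • w)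
    refine ⟨u, ?_⟩
    have hccs : c' - c ≠ 0 := sub_ne_zero.mpr (Ne.symm hcc)
    simp only [LinearMap.sub_apply, hgc, hgc', ← sub_smul]
    rw [hu, smul_smul, mul_inv_cancel₀ hccs, one_smul]

/-- Every member of the standard regulus other than `E₁` is complementary to `E₁`. -/
theorem stdRegulus_pairwise_distant (h : IsCompl E₀ E₁) (hf : Function.Bijective f) :
    (stdRegulus f h).Pairwise Distant := by
  rintro X hX Y hY hXY
  rcases hX with rfl | ⟨g, hg, rfl⟩
  · rcases hY with rfl | ⟨g', hg', rfl⟩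
    · exact absurd rfl hXY
    · exact (isCompl_graphOf_right h g').symm
  · rcases hY with rfl | ⟨g', hg', rfl⟩
    · exact isCompl_graphOf_right h g
    · exact distant_graphs h hf hg hg' hXY

/-- Members of the standard regulus are in the Grassmannian. -/
theorem stdRegulus_subset_grass (h : IsCompl E₀ E₁) (h₁ : E₁ ∈ Grass K V) :
    stdRegulus f h ⊆ Grass K V := by
  rintro X (rfl | ⟨g, hg, rfl⟩)
  · exact h₁
  · obtain ⟨e⟩ := h₁
    have hc : IsCompl (graphOf E₀ E₁ h g) E₁ := isCompl_graphOf_right h g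
    have e1 : (V ⧸ (graphOf E₀ E₁ h g)) ≃ₗ[K] E₁ :=
      (graphOf E₀ E₁ h g).quotientEquivOfIsCompl E₁ hc
    have e2 : (V ⧸ E₁) ≃ₗ[K] (graphOf E₀ E₁ h g) :=
      E₁.quotientEquivOfIsCompl _ hc.symm
    exact ⟨e2.symm.trans (e.symm.trans e1.symm)⟩

theorem coe_ne_zero' {p : Submodule K V} {v : p} (hv : v ≠ 0) : (v : V) ≠ 0 := by
  intro e
  exact hv (Subtype.ext e)

theorem isLine_transLine (h : IsCompl E₀ E₁) (hf : Function.Bijective f) {v : E₀} (hv : v ≠ 0) :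
    IsLine (Submodule.span K ({(v : V), (f v : V)} : Set V)) := by
  have hfv : f v ≠ 0 := fun e => hv (hf.injective (by rw [e, map_zero]))
  exact rank_span_pair_eq_two
    (pair_indep_of_isCompl h v.2 (f v).2 (coe_ne_zero' hv) (coe_ne_zero' hfv))

theorem transLine_meets (h : IsCompl E₀ E₁) (hf : Function.Bijective f) {v : E₀} (hv : v ≠ 0) :
    ∀ X ∈ stdRegulus f h, Meets (Submodule.span K ({(v : V), (f v : V)} : Set V)) X := by
  rintro X (rfl | ⟨g, ⟨c, hc, hgc⟩, rfl⟩)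
  · rw [Meets, Submodule.ne_bot_iff]
    have hfv : f v ≠ 0 := fun e => hv (hf.injective (by rw [e, map_zero]))
    refine ⟨(f v : V), Submodule.mem_inf.mpr ⟨?_, (f v).2⟩, coe_ne_zero' hfv⟩
    exact Submodule.subset_span (by simp)
  · rw [Meets, Submodule.ne_bot_iff]
    refine ⟨(v : V) + (g v : V), Submodule.mem_inf.mpr ⟨?_, graph_add_mem h g v⟩, ?_⟩
    · refine Submodule.mem_span_pair.mpr ⟨1, c, ?_⟩
      rw [one_smul, hgc v]
      norm_cast
    · intro e
      have h1 := p0_add h v (g v)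
      rw [e, map_zero] at h1
      exact hv h1.symm

theorem meets_graph_point (h : IsCompl E₀ E₁) {g : E₀ →ₗ[K] E₁} {L : Submodule K V}
    (hm : Meets L (graphOf E₀ E₁ h g)) :
    ∃ v : E₀, v ≠ 0 ∧ ((v : V) + (g v : V)) ∈ L := by
  rw [Meets, Submodule.ne_bot_iff] at hm
  obtain ⟨x, hx, hx0⟩ := hm
  obtain ⟨hxL, hxG⟩ := Submodule.mem_inf.mp hx
  have hrepr := graphOf_repr h g hxG
  refine ⟨E₀.projectionOnto E₁ h x, ?_, by rw [← hrepr]; exact hxL⟩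
  intro e
  rw [e] at hrepr
  simp at hrepr
  exact hx0 hrepr

theorem meets_point {N L : Submodule K V} (hm : Meets L N) :
    ∃ w : N, w ≠ 0 ∧ (w : V) ∈ L := by
  rw [Meets, Submodule.ne_bot_iff] at hm
  obtain ⟨x, hx, hx0⟩ := hm
  obtain ⟨hxL, hxN⟩ := Submodule.mem_inf.mp hx
  exact ⟨⟨x, hxN⟩, fun e => hx0 (congrArg Subtype.val e), hxL⟩

theorem transversal_case1 (h : IsCompl E₀ E₁) (hf : Function.Bijective f)
    {c c' : K} (hc : c ∈ Subring.center K) (hc' : c' ∈ Subring.center K) (hcc : c ≠ c')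
    {g g' : E₀ →ₗ[K] E₁} (hgc : ∀ v, g v = c • f v) (hgc' : ∀ v, g' v = c' • f v)
    {L : Submodule K V} (hL : IsLine L)
    (hm0 : Meets L (graphOf E₀ E₁ h g)) (hm1 : Meets L (graphOf E₀ E₁ h g'))
    (hmE : Meets L E₁) :
    ∃ v : E₀, v ≠ 0 ∧ L = Submodule.span K ({(v : V), (f v : V)} : Set V) := by
  obtain ⟨v₀, hv₀, hx₀⟩ := meets_graph_point h hm0
  obtain ⟨v₁, hv₁, hx₁⟩ := meets_graph_point h hm1
  obtain ⟨w, hw, hwL⟩ := meets_point hmE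
  refine ⟨v₀, hv₀, ?_⟩
  set x₀ : V := (v₀ : V) + (g v₀ : V) with hx₀def
  have hind : ∀ a b : K, a • x₀ + b • (w : V) = 0 → a = 0 ∧ b = 0 := by
    intro a b hab
    have hpr := congrArg (E₀.projectionOnto E₁ h) hab
    rw [map_add, map_smul, map_smul, p0_add h v₀ (g v₀),
      Submodule.projectionOnto_apply_of_mem_right h w.2, smul_zero, add_zero, map_zero] at hpr
    have ha : a = 0 := by
      rcases smul_eq_zero.mp hpr with h' | h'
      · exact h'
      · exact absurd h' hv₀
    refine ⟨ha, ?_⟩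
    rw [ha, zero_smul, zero_add] at hab
    rcases smul_eq_zero.mp hab with h' | h'
    · exact h'
    · exact absurd h' (coe_ne_zero' hw)
  have hLspan : Submodule.span K ({x₀, (w : V)} : Set V) = L :=
    span_pair_eq_of_rank_two hL hx₀ hwL hind
  have hx₁L : ((v₁ : V) + (g' v₁ : V)) ∈ Submodule.span K ({x₀, (w : V)} : Set V) := by
    rw [hLspan]; exact hx₁
  obtain ⟨α, β, hαβ⟩ := Submodule.mem_span_pair.mp hx₁L
  have hp0 : α • v₀ = v₁ := by
    have hpr := congrArg (E₀.projectionOnto E₁ h) hαβ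
    rwa [map_add, map_smul, map_smul, p0_add h v₀ (g v₀),
      Submodule.projectionOnto_apply_of_mem_right h w.2, smul_zero, add_zero,
      p0_add h v₁ (g' v₁)] at hpr
  have hα : α ≠ 0 := by
    intro e; rw [e, zero_smul] at hp0; exact hv₁ hp0.symm
  have hp1 : α • g v₀ + β • w = g' v₁ := by
    have hpr := congrArg (E₁.projectionOnto E₀ h.symm) hαβ
    rwa [map_add, map_smul, map_smul, p1_add h v₀ (g v₀),
      Submodule.linearProjOfIsCompl_apply_left h.symm w, p1_add h v₁ (g' v₁)] at hpr
  have hβw : β • w = (α * (c' - c)) • f v₀ := by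
    rw [hgc v₀] at hp1
    rw [hgc' v₁, ← hp0, map_smul, smul_smul, smul_smul] at hp1
    rw [mul_sub, sub_smul, Subring.mem_center_iff.mp hc' α]
    rw [← hp1]; abel
  have hfv₀ : f v₀ ≠ 0 := fun e => hv₀ (hf.injective (by rw [e, map_zero]))
  have hβ : β ≠ 0 := by
    intro e
    rw [e, zero_smul] at hβw
    rcases smul_eq_zero.mp hβw.symm with h' | h'
    · exact (mul_ne_zero hα (sub_ne_zero.mpr (Ne.symm hcc))) h'
    · exact hfv₀ h'
  have hwspan : (w : V) = (β⁻¹ * (α * (c' - c))) • (f v₀ : V) := by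
    have hco := congrArg (fun z : E₁ => (z : V)) hβw
    simp only [SetLike.val_smul] at hco
    rw [← smul_smul, ← hco, smul_smul, inv_mul_cancel₀ hβ, one_smul]
  have hle : Submodule.span K ({x₀, (w : V)} : Set V) ≤
      Submodule.span K ({(v₀ : V), (f v₀ : V)} : Set V) := by
    rw [Submodule.span_le]
    intro z hz
    rcases hz with rfl | hz
    · refine Submodule.mem_span_pair.mpr ⟨1, c, ?_⟩
      rw [one_smul, hx₀def, hgc v₀]
      norm_cast
    · rw [Set.mem_singleton_iff] at hz
      rw [hz, hwspan]
      exact Submodule.smul_mem _ _ (Submodule.subset_span (by simp))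
  rw [← hLspan]
  refine eq_of_le_of_rank_two hle ?_ (isLine_transLine h hf hv₀)
  rw [hLspan]; exact hL

theorem p0_combo (h : IsCompl E₀ E₁) (u u' : E₀) (w w' : E₁) (a b : K) :
    E₀.projectionOnto E₁ h (a • ((u : V) + (w : V)) + b • ((u' : V) + (w' : V)))
      = a • u + b • u' := by
  rw [map_add, map_smul, map_smul, p0_add h u w, p0_add h u' w']

theorem p1_combo (h : IsCompl E₀ E₁) (u u' : E₀) (w w' : E₁) (a b : K) :
    E₁.projectionOnto E₀ h.symm (a • ((u : V) + (w : V)) + b • ((u' : V) + (w' : V)))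
      = a • w + b • w' := by
  rw [map_add, map_smul, map_smul, p1_add h u w, p1_add h u' w']

theorem transversal_case2 (h : IsCompl E₀ E₁) (hf : Function.Bijective f)
    {c₀ c₁ c₂ : K} (hc₀ : c₀ ∈ Subring.center K) (hc₁ : c₁ ∈ Subring.center K)
    (hc₂ : c₂ ∈ Subring.center K) (hd01 : c₀ ≠ c₁) (hd02 : c₀ ≠ c₂) (hd12 : c₁ ≠ c₂)
    {g₀ g₁ g₂ : E₀ →ₗ[K] E₁} (hg₀ : ∀ v, g₀ v = c₀ • f v) (hg₁ : ∀ v, g₁ v = c₁ • f v)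
    (hg₂ : ∀ v, g₂ v = c₂ • f v)
    {L : Submodule K V} (hL : IsLine L)
    (hm0 : Meets L (graphOf E₀ E₁ h g₀)) (hm1 : Meets L (graphOf E₀ E₁ h g₁))
    (hm2 : Meets L (graphOf E₀ E₁ h g₂)) :
    ∃ v : E₀, v ≠ 0 ∧ L = Submodule.span K ({(v : V), (f v : V)} : Set V) := by
  obtain ⟨v₀, hv₀, hx₀⟩ := meets_graph_point h hm0
  obtain ⟨v₁, hv₁, hx₁⟩ := meets_graph_point h hm1
  obtain ⟨v₂, hv₂, hx₂⟩ := meets_graph_point h hm2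
  have hfv₀ : f v₀ ≠ 0 := fun e => hv₀ (hf.injective (by rw [e, map_zero]))
  by_cases hdep : v₁ ∈ Submodule.span K ({v₀} : Set E₀)
  · -- dependent case : L is the transversal through v₀
    obtain ⟨lam, hlam⟩ := Submodule.mem_span_singleton.mp hdep
    have hlam0 : lam ≠ 0 := by
      intro e; rw [e, zero_smul] at hlam; exact hv₁ hlam.symm
    refine ⟨v₀, hv₀, ?_⟩
    -- independence of x₀ and x₁
    have hind : ∀ a b : K,
        a • ((v₀ : V) + (g₀ v₀ : V)) + b • ((v₁ : V) + (g₁ v₁ : V)) = 0 → a = 0 ∧ b = 0 := by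
      intro a b hab
      have hpr0 := congrArg (E₀.projectionOnto E₁ h) hab
      rw [p0_combo h, map_zero] at hpr0
      have hpr1 := congrArg (E₁.projectionOnto E₀ h.symm) hab
      rw [p1_combo h, map_zero] at hpr1
      -- hpr0 : a • v₀ + b • v₁ = 0
      rw [← hlam, smul_smul, ← add_smul] at hpr0
      have ha : a + b * lam = 0 := by
        rcases smul_eq_zero.mp hpr0 with h' | h'
        · exact h'
        · exact absurd h' hv₀
      -- hpr1
      rw [hg₀ v₀, hg₁ v₁, ← hlam, map_smul, smul_smul, smul_smul, smul_smul,
        ← add_smul] at hpr1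
      have hb : a * c₀ + b * c₁ * lam = 0 := by
        rcases smul_eq_zero.mp hpr1 with h' | h'
        · exact h'
        · exact absurd h' hfv₀
      have ha' : a = -(b * lam) := by
        have := eq_neg_of_add_eq_zero_left ha; rw [this]
      rw [ha'] at hb
      have hbl : (b * lam) * (c₁ - c₀) = 0 := by
        calc (b * lam) * (c₁ - c₀)
            = b * lam * c₁ - b * lam * c₀ := by rw [mul_sub]
          _ = b * c₁ * lam - b * lam * c₀ := by
              rw [mul_assoc b lam c₁, Subring.mem_center_iff.mp hc₁ lam, ← mul_assoc]
          _ = -(b * lam) * c₀ + b * c₁ * lam := by rw [neg_mul]; abel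
          _ = 0 := hb
      have hb0 : b = 0 := by
        rcases mul_eq_zero.mp hbl with h' | h'
        · rcases mul_eq_zero.mp h' with h'' | h''
          · exact h''
          · exact absurd h'' hlam0
        · exact absurd h' (sub_ne_zero.mpr (Ne.symm hd01))
      refine ⟨?_, hb0⟩
      rw [hb0, zero_mul, neg_zero] at ha'
      exact ha'
    have hLspan : Submodule.span K
        ({(v₀ : V) + (g₀ v₀ : V), (v₁ : V) + (g₁ v₁ : V)} : Set V) = L :=
      span_pair_eq_of_rank_two hL hx₀ hx₁ hind
    have hle : Submodule.span K
        ({(v₀ : V) + (g₀ v₀ : V), (v₁ : V) + (g₁ v₁ : V)} : Set V) ≤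
        Submodule.span K ({(v₀ : V), (f v₀ : V)} : Set V) := by
      rw [Submodule.span_le]
      intro z hz
      rcases hz with rfl | hz
      · refine Submodule.mem_span_pair.mpr ⟨1, c₀, ?_⟩
        rw [one_smul, hg₀ v₀]
        norm_cast
      · rw [Set.mem_singleton_iff] at hz
        refine Submodule.mem_span_pair.mpr ⟨lam, c₁ * lam, ?_⟩
        rw [hz, hg₁ v₁, ← hlam, map_smul]
        push_cast
        rw [smul_smul]
      -- ↑(lam • v₀) + ↑((c₁ * lam) • f v₀) vs lam • ↑v₀ + (c₁*lam) • ↑(f v₀)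
    rw [← hLspan]
    refine eq_of_le_of_rank_two hle ?_ (isLine_transLine h hf hv₀)
    rw [hLspan]; exact hL
  · -- independent case : contradiction
    exfalso
    have hindE₀ := indep_of_not_mem_span hv₀ hdep
    have hindE₁ : ∀ a b : K, a • f v₀ + b • f v₁ = 0 → a = 0 ∧ b = 0 := by
      intro a b hab
      apply hindE₀
      apply hf.injective
      rw [map_add, map_smul, map_smul, map_zero, hab]
    have hind : ∀ a b : K,
        a • ((v₀ : V) + (g₀ v₀ : V)) + b • ((v₁ : V) + (g₁ v₁ : V)) = 0 → a = 0 ∧ b = 0 := by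
      intro a b hab
      have hpr0 := congrArg (E₀.projectionOnto E₁ h) hab
      rw [p0_combo h, map_zero] at hpr0
      exact hindE₀ a b hpr0
    have hLspan : Submodule.span K
        ({(v₀ : V) + (g₀ v₀ : V), (v₁ : V) + (g₁ v₁ : V)} : Set V) = L :=
      span_pair_eq_of_rank_two hL hx₀ hx₁ hind
    have hx₂L : ((v₂ : V) + (g₂ v₂ : V)) ∈ Submodule.span K
        ({(v₀ : V) + (g₀ v₀ : V), (v₁ : V) + (g₁ v₁ : V)} : Set V) := by
      rw [hLspan]; exact hx₂
    obtain ⟨α, β, hαβ⟩ := Submodule.mem_span_pair.mp hx₂L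
    have hp0 : α • v₀ + β • v₁ = v₂ := by
      have hpr := congrArg (E₀.projectionOnto E₁ h) hαβ
      rwa [p0_combo h, p0_add h v₂ (g₂ v₂)] at hpr
    have hp1 : α • g₀ v₀ + β • g₁ v₁ = g₂ v₂ := by
      have hpr := congrArg (E₁.projectionOnto E₀ h.symm) hαβ
      rwa [p1_combo h, p1_add h v₂ (g₂ v₂)] at hpr
    rw [hg₀ v₀, hg₁ v₁, hg₂ v₂, ← hp0, map_add, map_smul, map_smul, smul_add] at hp1
    rw [smul_smul, smul_smul, smul_smul, smul_smul] at hp1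
    -- hp1 : (α*c₀)•f v₀ + (β*c₁)•f v₁ = (c₂*α)•f v₀ + (c₂*β)•f v₁
    have hzero : (α * c₀ - c₂ * α) • f v₀ + (β * c₁ - c₂ * β) • f v₁ = 0 := by
      calc (α * c₀ - c₂ * α) • f v₀ + (β * c₁ - c₂ * β) • f v₁
          = ((α * c₀) • f v₀ + (β * c₁) • f v₁) - ((c₂ * α) • f v₀ + (c₂ * β) • f v₁) := by
            rw [sub_smul, sub_smul]; abel
        _ = 0 := sub_eq_zero.mpr hp1
    obtain ⟨hA, hB⟩ := hindE₁ _ _ hzero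
    rw [sub_eq_zero, Subring.mem_center_iff.mp hc₂ α |>.symm] at hA
    rw [sub_eq_zero, Subring.mem_center_iff.mp hc₂ β |>.symm] at hB
    -- hA : α * c₀ = α * c₂  → α = 0
    have hα : α = 0 := by
      by_contra hα
      exact hd02 (mul_left_cancel₀ hα hA)
    have hβ : β = 0 := by
      by_contra hβ
      exact hd12 (mul_left_cancel₀ hβ hB)
    rw [hα, hβ, zero_smul, zero_smul, add_zero] at hp0
    exact hv₂ hp0.symm

theorem mem_stdRegulus_E₀ (h : IsCompl E₀ E₁) : E₀ ∈ stdRegulus f h :=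
  Set.mem_insert_iff.mpr (Or.inr ⟨0, isCentralMul_zero f, (graphOf_zero h).symm⟩)

theorem mem_stdRegulus_E₁ (h : IsCompl E₀ E₁) : E₁ ∈ stdRegulus f h :=
  Set.mem_insert _ _

theorem mem_stdRegulus_graph (h : IsCompl E₀ E₁) : graphOf E₀ E₁ h f ∈ stdRegulus f h :=
  Set.mem_insert_iff.mpr (Or.inr ⟨f, isCentralMul_self f, rfl⟩)

theorem distant_ne (hnt : Nontrivial V) {X Y : Submodule K V} (hd : IsCompl X Y) : X ≠ Y := by
  intro e
  subst e
  have hb : X = ⊥ := disjoint_self.mp hd.disjoint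
  have ht : X = ⊤ := codisjoint_self.mp hd.codisjoint
  obtain ⟨x, hx⟩ := exists_ne (0 : V)
  have : x ∈ X := ht ▸ Submodule.mem_top
  rw [hb, Submodule.mem_bot] at this
  exact hx this

theorem stdRegulus_R2 (h : IsCompl E₀ E₁) (hf : Function.Bijective f) :
    MeetsThreeMeetsAll (stdRegulus f h) := by
  intro L hL A hA B hB C hC hAB hAC hBC hmA hmB hmC E hE
  have key : ∃ v : E₀, v ≠ 0 ∧ L = Submodule.span K ({(v : V), (f v : V)} : Set V) := by
    rcases hA with rfl | ⟨g₀, ⟨c₀, hcc₀, hg₀⟩, rfl⟩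
    · rcases hB with rfl | ⟨g₁, ⟨c₁, hcc₁, hg₁⟩, rfl⟩
      · exact absurd rfl hAB
      · rcases hC with rfl | ⟨g₂, ⟨c₂, hcc₂, hg₂⟩, rfl⟩
        · exact absurd rfl hAC
        · have hcc : c₁ ≠ c₂ := fun e =>
            hBC ((graphOf_eq_iff h).mpr fun v => by rw [hg₁, hg₂, e])
          exact transversal_case1 h hf hcc₁ hcc₂ hcc hg₁ hg₂ hL hmB hmC hmA
    · rcases hB with rfl | ⟨g₁, ⟨c₁, hcc₁, hg₁⟩, rfl⟩
      · rcases hC with rfl | ⟨g₂, ⟨c₂, hcc₂, hg₂⟩, rfl⟩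
        · exact absurd rfl hBC
        · have hcc : c₀ ≠ c₂ := fun e =>
            hAC ((graphOf_eq_iff h).mpr fun v => by rw [hg₀, hg₂, e])
          exact transversal_case1 h hf hcc₀ hcc₂ hcc hg₀ hg₂ hL hmA hmC hmB
      · rcases hC with rfl | ⟨g₂, ⟨c₂, hcc₂, hg₂⟩, rfl⟩
        · have hcc : c₀ ≠ c₁ := fun e =>
            hAB ((graphOf_eq_iff h).mpr fun v => by rw [hg₀, hg₁, e])
          exact transversal_case1 h hf hcc₀ hcc₁ hcc hg₀ hg₁ hL hmA hmB hmC
        · have hcc01 : c₀ ≠ c₁ := fun e =>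
            hAB ((graphOf_eq_iff h).mpr fun v => by rw [hg₀, hg₁, e])
          have hcc02 : c₀ ≠ c₂ := fun e =>
            hAC ((graphOf_eq_iff h).mpr fun v => by rw [hg₀, hg₂, e])
          have hcc12 : c₁ ≠ c₂ := fun e =>
            hBC ((graphOf_eq_iff h).mpr fun v => by rw [hg₁, hg₂, e])
          exact transversal_case2 h hf hcc₀ hcc₁ hcc₂ hcc01 hcc02 hcc12 hg₀ hg₁ hg₂ hL
            hmA hmB hmC
  obtain ⟨v, hv, hLv⟩ := key
  rw [hLv]
  exact transLine_meets h hf hv E hE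

/-- Any partial Z-regulus containing `E₀`, `E₁` and the graph of `f` is contained in
the standard regulus. -/
theorem subset_stdRegulus (h : IsCompl E₀ E₁) (hf : Function.Bijective f)
    (hE₁rank : 1 < Module.rank K (E₁ : Submodule K V))
    {S : Set (Submodule K V)} (hS : IsPartialZRegulus S)
    (h0 : E₀ ∈ S) (h1 : E₁ ∈ S) (h2 : graphOf E₀ E₁ h f ∈ S)
    (hne01 : E₀ ≠ E₁) (hne02 : E₀ ≠ graphOf E₀ E₁ h f) (hne12 : E₁ ≠ graphOf E₀ E₁ h f) :
    S ⊆ stdRegulus f h := by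
  intro X hX
  by_cases hXE₁ : X = E₁
  · rw [hXE₁]; exact mem_stdRegulus_E₁ h
  -- X is distant from E₁, hence a graph
  have hXd : IsCompl X E₁ := by
    rcases eq_or_ne X E₁ with e | hne
    · exact absurd e hXE₁
    · exact hS.1.1.2 hX h1 hne
  obtain ⟨g, hXg⟩ := exists_graphOf h hXd
  -- the endomorphism g ∘ f⁻¹ of E₁
  set fe := LinearEquiv.ofBijective f hf with hfe
  set F : E₁ →ₗ[K] E₁ := g ∘ₗ (fe.symm : E₁ ≃ₗ[K] E₀).toLinearMap with hF
  have hloc : ∀ w : E₁, ∃ c : K, F w = c • w := by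
    intro w
    by_cases hw : w = 0
    · exact ⟨0, by rw [hw, map_zero, smul_zero]⟩
    set v : E₀ := fe.symm w with hv
    have hfv : f v = w := fe.apply_symm_apply w
    have hv0 : v ≠ 0 := by
      intro e
      rw [← hfv, e, map_zero] at hw
      exact hw rfl
    -- the transversal line through v meets every element of S
    have hmeets := hS.2 (Submodule.span K ({(v : V), (f v : V)} : Set V))
      (isLine_transLine h hf hv0) E₀ h0 E₁ h1 (graphOf E₀ E₁ h f) h2 hne01 hne02 hne12
      (transLine_meets h hf hv0 E₀ (mem_stdRegulus_E₀ h))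
      (transLine_meets h hf hv0 E₁ (mem_stdRegulus_E₁ h))
      (transLine_meets h hf hv0 _ (mem_stdRegulus_graph h))
    have hmX : Meets (Submodule.span K ({(v : V), (f v : V)} : Set V)) X := hmeets X hX
    rw [hXg] at hmX
    obtain ⟨u, hu, huL⟩ := meets_graph_point h hmX
    obtain ⟨α, β, hαβ⟩ := Submodule.mem_span_pair.mp huL
    have hp0 : α • v = u := by
      have hpr := congrArg (E₀.projectionOnto E₁ h) hαβ
      rwa [map_add, map_smul, map_smul, Submodule.linearProjOfIsCompl_apply_left h v,
        Submodule.projectionOnto_apply_of_mem_right h (f v).2, smul_zero, add_zero,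
        p0_add h u (g u)] at hpr
    have hp1 : β • f v = g u := by
      have hpr := congrArg (E₁.projectionOnto E₀ h.symm) hαβ
      rwa [map_add, map_smul, map_smul, Submodule.linearProjOfIsCompl_apply_left h.symm (f v),
        Submodule.projectionOnto_apply_of_mem_right h.symm v.2, smul_zero, zero_add,
        p1_add h u (g u)] at hpr
    have hα : α ≠ 0 := by
      intro e
      rw [e, zero_smul] at hp0
      exact hu hp0.symm
    refine ⟨α⁻¹ * β, ?_⟩
    have hFw : F w = g v := by rw [hF]; simp [hv]
    rw [hFw, ← hfv]
    -- goal : g v = (α⁻¹ * β) • f v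
    rw [← hp0, map_smul] at hp1
    have := congrArg (fun z => α⁻¹ • z) hp1
    simp only [smul_smul] at this
    rw [inv_mul_cancel₀ hα, one_smul] at this
    rw [← this]
  obtain ⟨c, hcent, hc⟩ := exists_central_of_locally_scalar hE₁rank F hloc
  refine Set.mem_insert_iff.mpr (Or.inr ⟨g, ⟨c, hcent, ?_⟩, hXg⟩)
  intro v
  have h1' : F (f v) = g v := by rw [hF]; simp [hfe]
  rw [← h1', hc (f v)]

end Main

end Helper

/-- Corollary 4.7 (second part). Any three mutually distant
elements of `𝒢` lie in a unique `Z`-regulus. -/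
theorem unique_zRegulus_through_three (hV : 2 < Module.rank K V)
    (E₀ E₁ E₂ : Submodule K V)
    (h₀ : E₀ ∈ Grass K V) (h₁ : E₁ ∈ Grass K V) (h₂ : E₂ ∈ Grass K V)
    (h01 : Distant E₀ E₁) (h02 : Distant E₀ E₂) (h12 : Distant E₁ E₂) :
    ∃! R : Set (Submodule K V), IsZRegulus R ∧ E₀ ∈ R ∧ E₁ ∈ R ∧ E₂ ∈ R := by
  classical
  have hnt : Nontrivial V := by
    rcases subsingleton_or_nontrivial V with hs | hs
    · exfalso
      have h0 : Module.rank K V = 0 := rank_subsingleton' K V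
      rw [h0] at hV
      exact absurd hV (by norm_num)
    · exact hs
  have h01' : IsCompl E₀ E₁ := h01
  have h12' : IsCompl E₁ E₂ := h12
  have h02' : IsCompl E₀ E₂ := h02
  have hE₁rank : 1 < Module.rank K (E₁ : Submodule K V) := by
    have hq := Submodule.rank_quotient_add_rank E₁
    obtain ⟨e⟩ := h₁
    have he : Module.rank K (V ⧸ E₁) = Module.rank K E₁ := e.rank_eq.symm
    by_contra hle
    push_neg at hle
    rw [he] at hq
    have hV2 : Module.rank K V ≤ 2 := by
      rw [← hq]
      calc Module.rank K (E₁ : Submodule K V) + Module.rank K (E₁ : Submodule K V)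
          ≤ 1 + 1 := add_le_add hle hle
        _ = 2 := one_add_one_eq_two
    exact absurd hV (not_lt.mpr hV2)
  obtain ⟨f, hE₂f⟩ := exists_graphOf h01' h12'.symm
  have hf : Function.Bijective f := bijective_of_isCompl_graphOf_left h01'
    (by rw [← hE₂f]; exact h02'.symm)
  set R := stdRegulus f h01' with hR
  have hm0 : E₀ ∈ R := mem_stdRegulus_E₀ h01'
  have hm1 : E₁ ∈ R := mem_stdRegulus_E₁ h01'
  have hm2 : E₂ ∈ R := by rw [hE₂f]; exact mem_stdRegulus_graph h01'
  have hne01 : E₀ ≠ E₁ := distant_ne hnt h01'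
  have hne02g : E₀ ≠ graphOf E₀ E₁ h01' f := by
    rw [← hE₂f]; exact distant_ne hnt h02'
  have hne12g : E₁ ≠ graphOf E₀ E₁ h01' f := by
    rw [← hE₂f]; exact distant_ne hnt h12'
  have hpartial : IsPartialZRegulus R := by
    refine ⟨⟨⟨stdRegulus_subset_grass h01' h₁,
      stdRegulus_pairwise_distant h01' hf⟩, ?_⟩, stdRegulus_R2 h01' hf⟩
    exact ⟨E₀, hm0, E₁, hm1, E₂, hm2, hne01, distant_ne hnt h02',
      distant_ne hnt h12'⟩
  have hsub : ∀ S : Set (Submodule K V),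
      IsPartialZRegulus S → E₀ ∈ S → E₁ ∈ S → E₂ ∈ S → S ⊆ R := by
    intro S hS hS0 hS1 hS2
    exact subset_stdRegulus h01' hf hE₁rank hS hS0 hS1
      (by rw [← hE₂f]; exact hS2) hne01 hne02g hne12g
  have hZ : IsZRegulus R := by
    refine ⟨hpartial, ?_⟩
    intro S hS hRS
    exact Set.Subset.antisymm hRS (hsub S hS (hRS hm0) (hRS hm1) (hRS hm2))
  refine ⟨R, ⟨hZ, hm0, hm1, hm2⟩, ?_⟩
  rintro R' ⟨hZ', hm0', hm1', hm2'⟩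
  exact hZ'.2 R hpartial (hsub R' hZ'.1 hm0' hm1' hm2')
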